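/- Let R be a commutative ring, r ∈ R, and C an R-module with Hom_R(R[r^{-1}], C) = 0 = Ext^1_R(R[r^{-1}], C) (an r-contramodule). Then the ideal h_r(R) ⊆ R consisting of the maximal r-divisible submodule of R (the set of elements lying in ∩ of images of multiplication-by-r iterated, i.e., the largest submodule D with rD = D) annihilates C, so C is naturally an R/h_r(R)-module. -/

import Mathlib

open CategoryTheory

private theorem contra_key {R : Type} [CommRing R] {r : R} {C : Type} [AddCommGroup C]
    [Module R C] (h0 : Subsingleton (Localization.Away r →ₗ[R] C))
    (b : ℕ → C) (hb : ∀ n, b n = r • b (n + 1)) : b 0 = 0 := by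
  have hpow : ∀ n k, b n = r ^ k • b (n + k) := by
    intro n k
    induction k with
    | zero => simp
    | succ k ih =>
      rw [ih, hb (n + k), ← mul_smul, ← pow_succ]
      rfl
  -- the value x • b n only depends on x and r ^ n
  have heval : ∀ (x : R) (n m : ℕ), r ^ n = r ^ m → x • b n = x • b m := by
    intro x n m h
    rw [hpow n m, hpow m n, ← mul_smul, ← mul_smul, ← h, Nat.add_comm m n]
  set S := Submonoid.powers r with hS
  have hwd : ∀ {x y : R} {s t : S},
      Localization.r S (x, s) (y, t) → x • b s.2.choose = y • b t.2.choose := by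
    intro x y s t hrel
    obtain ⟨u, hu⟩ := Localization.r_iff_exists.mp hrel
    obtain ⟨j, hj⟩ := u.2
    have hj' : r ^ j = (u : R) := hj
    set n := s.2.choose with hn
    set m := t.2.choose with hm
    have hs : r ^ n = (s : R) := s.2.choose_spec
    have ht : r ^ m = (t : R) := t.2.choose_spec
    have key : r ^ j * (r ^ m * x) = r ^ j * (r ^ n * y) := by
      rw [hs, ht, hj']; exact hu
    calc x • b n = x • (r ^ (j + m) • b (n + (j + m))) := by rw [← hpow]
      _ = (r ^ j * (r ^ m * x)) • b (n + (j + m)) := by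
          rw [← mul_smul]; ring_nf
      _ = (r ^ j * (r ^ n * y)) • b (m + (j + n)) := by
          rw [key]; congr 1; ring
      _ = y • (r ^ (j + n) • b (m + (j + n))) := by
          rw [← mul_smul]; ring_nf
      _ = y • b m := by rw [← hpow]
  let φ0 : Localization.Away r → C :=
    fun z => Localization.liftOn z (fun x s => x • b s.2.choose) hwd
  have hφmk : ∀ (x : R) (s : S) (n : ℕ), (s : R) = r ^ n →
      φ0 (Localization.mk x s) = x • b n := by
    intro x s n hsn
    show x • b s.2.choose = x • b n
    exact heval x _ n (s.2.choose_spec.trans hsn)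
  have φadd : ∀ z w, φ0 (z + w) = φ0 z + φ0 w := by
    intro z w
    induction z using Localization.induction_on with | H z =>
    induction w using Localization.induction_on with | H w =>
    obtain ⟨x, s⟩ := z
    obtain ⟨y, t⟩ := w
    obtain ⟨n, hn⟩ := s.2
    obtain ⟨m, hm⟩ := t.2
    rw [Localization.add_mk, hφmk x s n hn.symm, hφmk y t m hm.symm,
      hφmk _ (s * t) (n + m) (by push_cast [← hn, ← hm, pow_add]; ring)]
    rw [← hn, ← hm, add_smul, hpow m n, hpow n m]
    rw [← mul_smul, ← mul_smul]
    rw [Nat.add_comm m n, mul_comm x (r ^ m), mul_comm y (r ^ n)]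
    abel
  have φsmul : ∀ (x : R) (z : Localization.Away r), φ0 (x • z) = x • φ0 z := by
    intro x z
    induction z using Localization.induction_on with | H z =>
    obtain ⟨y, s⟩ := z
    obtain ⟨n, hn⟩ := s.2
    rw [Localization.smul_mk, hφmk _ s n hn.symm, hφmk y s n hn.symm, smul_eq_mul, mul_smul]
  let φ : Localization.Away r →ₗ[R] C :=
    { toFun := φ0, map_add' := φadd, map_smul' := φsmul }
  have hzero : φ = 0 := Subsingleton.elim _ _
  have : φ0 (Localization.mk 1 1) = 0 := by
    have := congrArg (fun ψ => ψ (Localization.mk 1 1)) hzero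
    simpa [φ] using this
  rw [hφmk 1 1 0 (by simp)] at this
  simpa using this

/-- Let `R` be a commutative ring, `r ∈ R`, and `C` an `R`-module with
`Hom_R(R[r⁻¹], C) = 0 = Ext¹_R(R[r⁻¹], C)` (an `r`-contramodule).  Then the ideal
`h_r(R) ⊆ R`, the maximal `r`-divisible submodule of `R` (the sum of all ideals `I` with
`rI = I`), annihilates `C`; so `C` is naturally an `R/h_r(R)`-module. -/
theorem divisible_ideal_annihilates_contramodule
    (R : Type) [CommRing R] (r : R)
    (C : Type) [AddCommGroup C] [Module R C]
    (h0 : Subsingleton (Localization.Away r →ₗ[R] C))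
    (h1 : Subsingleton (((Ext R (ModuleCat R) 1).obj
      (Opposite.op (ModuleCat.of R (Localization.Away r)))).obj (ModuleCat.of R C))) :
    ∀ a ∈ sSup {I : Ideal R | ∀ x ∈ I, ∃ y ∈ I, x = r * y}, ∀ c : C, a • c = 0 := by
  intro a ha c
  set S := {I : Ideal R | ∀ x ∈ I, ∃ y ∈ I, x = r * y} with hSdef
  have hdiv : ∀ x ∈ sSup S, ∃ y ∈ sSup S, x = r * y := by
    have hrw : sSup S = ⨆ I : S, (I : Ideal R) := sSup_eq_iSup' S
    intro x hx
    rw [hrw] at hx ⊢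
    refine Submodule.iSup_induction (motive := fun x => ∃ y ∈ ⨆ I : S, (I : Ideal R), x = r * y)
      _ hx ?_ ?_ ?_
    · rintro ⟨I, hI⟩ x hxI
      obtain ⟨y, hy, hxy⟩ := hI x hxI
      exact ⟨y, Submodule.mem_iSup_of_mem ⟨I, hI⟩ hy, hxy⟩
    · exact ⟨0, zero_mem _, by rw [mul_zero]⟩
    · rintro x y ⟨x', hx', rfl⟩ ⟨y', hy', rfl⟩
      exact ⟨x' + y', add_mem hx' hy', by rw [mul_add]⟩
  have hdiv' : ∀ p : {x : R // x ∈ sSup S}, ∃ q : {x : R // x ∈ sSup S}, (p : R) = r * q := by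
    rintro ⟨x, hx⟩
    obtain ⟨y, hy, hxy⟩ := hdiv x hx
    exact ⟨⟨y, hy⟩, hxy⟩
  let seq : ℕ → {x : R // x ∈ sSup S} := fun n =>
    Nat.rec ⟨a, ha⟩ (fun _ p => (hdiv' p).choose) n
  have hseq : ∀ n, (seq n).1 = r * (seq (n + 1)).1 := by
    intro n
    exact (hdiv' (seq n)).choose_spec
  have := contra_key h0 (fun n => (seq n).1 • c)
    (fun n => by
      show (seq n).1 • c = r • ((seq (n + 1)).1 • c)
      rw [hseq n, mul_smul])
  simpa [seq] using this
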